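/- Let k ≥ 2 and let a₁,…,a_k be positive integers with gcd(a₁,…,a_k) = 1 and a = min(a₁,…,a_k), let p be a nonnegative integer, and let x be a real number with |x| < 1. Then (1 − x^a) · Σ_{s ∈ S_p(a₁,…,a_k)} x^s = Σ_{j=0}^{a−1} x^{m_j^{(p)}}, where the sum on the left is the (convergent) series over all elements of S_p and m_j^{(p)} is the least element of S_p congruent to j modulo a (with m_0^{(0)} = 0). -/

import Mathlib

/-- The denumerant `d(n; a 0, …, a (k-1))`: the number of tuples `x` of nonnegative
integers with `x 0 * a 0 + ⋯ + x (k-1) * a (k-1) = n`. -/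
noncomputable def denum (k : ℕ) (a : ℕ → ℕ) (n : ℕ) : ℕ :=
  Nat.card {x : Fin k → ℕ // ∑ i : Fin k, x i * a i.1 = n}

lemma denum_finite (k : ℕ) (a : ℕ → ℕ) (hapos : ∀ i < k, 0 < a i) (n : ℕ) :
    Finite {x : Fin k → ℕ // ∑ i : Fin k, x i * a i.1 = n} := by
  have hb : ∀ (x : {x : Fin k → ℕ // ∑ i : Fin k, x i * a i.1 = n}) (i : Fin k),
      x.1 i < n + 1 := by
    intro x i
    have h1 : x.1 i * 1 ≤ x.1 i * a i.1 := Nat.mul_le_mul_left _ (hapos i.1 i.2)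
    have h2 : x.1 i * a i.1 ≤ n := by
      have := Finset.single_le_sum (f := fun i : Fin k => x.1 i * a i.1)
        (fun _ _ => Nat.zero_le _) (Finset.mem_univ i)
      rw [x.2] at this
      exact this
    omega
  exact Finite.of_injective
    (fun x => (fun i => (⟨x.1 i, hb x i⟩ : Fin (n + 1)) : Fin k → Fin (n + 1)))
    (by
      intro x y h
      ext i
      exact congrArg Fin.val (congrFun h i))

lemma denum_mono (k : ℕ) (hk : 0 < k) (a : ℕ → ℕ) (hapos : ∀ i < k, 0 < a i) (n : ℕ) :
    denum k a n ≤ denum k a (n + a 0) := by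
  have : Finite {x : Fin k → ℕ // ∑ i : Fin k, x i * a i.1 = n + a 0} :=
    denum_finite k a hapos (n + a 0)
  set i0 : Fin k := ⟨0, hk⟩ with hi0
  refine Nat.card_le_card_of_injective
    (f := fun x => ⟨fun i => x.1 i + (if i = i0 then 1 else 0), ?_⟩) ?_
  · rw [show (∑ i : Fin k, (x.1 i + (if i = i0 then 1 else 0)) * a i.1)
        = (∑ i : Fin k, x.1 i * a i.1) + ∑ i : Fin k, (if i = i0 then a i.1 else 0) by
      rw [← Finset.sum_add_distrib]
      congr 1; ext i
      by_cases h : i = i0 <;> simp [h, add_mul]]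
    rw [x.2, Finset.sum_ite_eq' Finset.univ i0 (fun i => a i.1)]
    simp [hi0]
  · intro x y h
    apply Subtype.ext
    ext i
    have := congrFun (congrArg Subtype.val h) i
    simp only at this
    omega

theorem pHilbert_series_eq (k : ℕ) (hk : 2 ≤ k) (a : ℕ → ℕ)
    (hapos : ∀ i < k, 0 < a i)
    (hgcd : (Finset.range k).gcd a = 1)
    (hmin : ∀ i < k, a 0 ≤ a i)
    (p : ℕ) (m : ℕ → ℕ)
    (hm : ∀ j < a 0, IsLeast {n : ℕ | p < denum k a n ∧ n % a 0 = j} (m j))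
    (x : ℝ) (hx : |x| < 1) :
    (1 - x ^ (a 0)) * (∑' s : {n : ℕ | p < denum k a n}, x ^ (s : ℕ))
      = ∑ j ∈ Finset.range (a 0), x ^ (m j) := by
  have h0k : 0 < k := lt_of_lt_of_le two_pos hk
  set A := a 0 with hA
  have hApos : 0 < A := hapos 0 h0k
  set S := {n : ℕ | p < denum k a n} with hSdef
  have hclosed : ∀ n ∈ S, n + A ∈ S := fun n hn =>
    lt_of_lt_of_le hn (denum_mono k h0k a hapos n)
  have hmem : ∀ (j : Fin A) (t : ℕ), (m j.1 + t * A) ∈ S := by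
    intro j t
    induction t with
    | zero => simpa using (show m j.1 ∈ S from (hm j.1 j.2).1.1)
    | succ t ih =>
      have := hclosed _ ih
      have heq : m j.1 + (t + 1) * A = m j.1 + t * A + A := by ring
      rwa [heq]
  have hmmod : ∀ j < A, m j % A = j := fun j hj => (hm j hj).1.2
  let g : Fin A × ℕ → S := fun jt => ⟨m jt.1.1 + jt.2 * A, hmem jt.1 jt.2⟩
  have hbij : Function.Bijective g := by
    constructor
    · rintro ⟨j, t⟩ ⟨j', t'⟩ h
      have h' : m j.1 + t * A = m j'.1 + t' * A := congrArg Subtype.val h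
      have hj1 : (m j.1 + t * A) % A = j.1 := by
        rw [Nat.add_mul_mod_self_right, hmmod j.1 j.2]
      have hj2 : (m j'.1 + t' * A) % A = j'.1 := by
        rw [Nat.add_mul_mod_self_right, hmmod j'.1 j'.2]
      have hjj : j = j' := Fin.ext (by rw [← hj1, ← hj2, h'])
      subst hjj
      have : t = t' := by
        have hAne : A ≠ 0 := hApos.ne'
        have : t * A = t' * A := by omega
        exact Nat.eq_of_mul_eq_mul_right hApos this
      simp [this]
    · rintro ⟨s, hs⟩
      have hj : s % A < A := Nat.mod_lt _ hApos
      have hle : m (s % A) ≤ s := (hm _ hj).2 ⟨hs, rfl⟩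
      have hmod : m (s % A) % A = s % A := hmmod _ hj
      have hdvd : A ∣ s - m (s % A) :=
        (Nat.modEq_iff_dvd' hle).mp (by unfold Nat.ModEq; rw [hmod])
      refine ⟨⟨⟨s % A, hj⟩, (s - m (s % A)) / A⟩, ?_⟩
      apply Subtype.ext
      show m (s % A) + (s - m (s % A)) / A * A = s
      rw [Nat.div_mul_cancel hdvd]
      omega
  have hsum : Summable (fun s : S => x ^ (s : ℕ)) :=
    (summable_geometric_of_abs_lt_one hx).subtype S
  have hxA : |x ^ A| < 1 := by
    rw [abs_pow]
    exact pow_lt_one₀ (abs_nonneg x) hx hApos.ne'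
  have he : (∑' s : S, x ^ (s : ℕ)) = ∑' jt : Fin A × ℕ, x ^ (m jt.1.1 + jt.2 * A) :=
    ((Equiv.ofBijective g hbij).tsum_eq (fun s : S => x ^ (s : ℕ))).symm
  have hsum2 : Summable (fun jt : Fin A × ℕ => x ^ (m jt.1.1 + jt.2 * A)) :=
    ((Equiv.ofBijective g hbij).summable_iff (f := fun s : S => x ^ (s : ℕ))).mpr hsum
  rw [he, hsum2.tsum_prod]
  have hinner : ∀ j : Fin A, (∑' t : ℕ, x ^ (m j.1 + t * A)) = x ^ (m j.1) * (1 - x ^ A)⁻¹ := by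
    intro j
    have : ∀ t : ℕ, x ^ (m j.1 + t * A) = x ^ (m j.1) * (x ^ A) ^ t := by
      intro t
      rw [pow_add, ← pow_mul, mul_comm t A, pow_mul]
    simp_rw [this]
    rw [tsum_mul_left, tsum_geometric_of_abs_lt_one hxA]
  simp_rw [hinner]
  rw [tsum_fintype, ← Finset.sum_mul, Finset.sum_range (fun j => x ^ (m j))]
  have hne : 1 - x ^ A ≠ 0 := by
    intro h
    have : x ^ A = 1 := by linarith
    rw [this] at hxA
    simp at hxA
  field_simp
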